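/- Let $\kappa > 0$, $0 < \alpha < 1$, and let $0 < a < x$. Then $\int_{x-a}^{x} \left(\frac{2\sqrt{\kappa}}{1-e^{-2\sqrt{\kappa}(x-z)}}\right)^{\alpha} \cdot \frac{(1-\alpha)\sin(\alpha\pi)}{\pi} e^{2\sqrt{\kappa}(\alpha-1)z}\left(\frac{2\sqrt{\kappa}}{1-e^{-2\sqrt{\kappa}z}}\right)^{2-\alpha} dz = \frac{\sqrt{\kappa}}{\pi}\sin(\alpha\pi)\,\frac{e^{\alpha\sqrt{\kappa}x}\,(\sinh(\sqrt{\kappa}a))^{1-\alpha}}{\sinh(\sqrt{\kappa}x)\,(\sinh(\sqrt{\kappa}(x-a)))^{1-\alpha}}$. -/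

import Mathlib

open Real MeasureTheory

/-- Overshoot density computation: for `κ > 0`, `0 < α < 1`, `0 < a < x`,
`∫_{x-a}^{x} u(x-z) Π(z) dz` equals the displayed closed form, where
`u(t) = (2√κ/(1-e^{-2√κ t}))^α` and
`Π(z) = ((1-α) sin(απ)/π) e^{2√κ(α-1)z} (2√κ/(1-e^{-2√κ z}))^{2-α}`. -/
theorem overshoot_density (κ α a x : ℝ) (hκ : 0 < κ) (hα0 : 0 < α) (hα1 : α < 1)
    (ha : 0 < a) (hax : a < x) :
    ∫ z in Set.Ioo (x - a) x,
        (2 * Real.sqrt κ / (1 - Real.exp (-2 * Real.sqrt κ * (x - z)))) ^ α *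
          ((1 - α) * Real.sin (α * π) / π * Real.exp (2 * Real.sqrt κ * (α - 1) * z) *
            (2 * Real.sqrt κ / (1 - Real.exp (-2 * Real.sqrt κ * z))) ^ (2 - α))
      = Real.sqrt κ / π * Real.sin (α * π) *
          (Real.exp (α * Real.sqrt κ * x) * (Real.sinh (Real.sqrt κ * a)) ^ (1 - α) /
            (Real.sinh (Real.sqrt κ * x) *
              (Real.sinh (Real.sqrt κ * (x - a))) ^ (1 - α))) := by
  set s := Real.sqrt κ with hs_def
  have hs : 0 < s := Real.sqrt_pos.mpr hκ
  have hss : s * s = κ := Real.mul_self_sqrt hκ.le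
  have h1α : (0:ℝ) < 1 - α := by linarith
  -- the simplified integrand
  set g : ℝ → ℝ := fun z => Real.sinh (s * (x - z)) ^ (-α) * Real.sinh (s * z) ^ (α - 2)
    with hg_def
  set K : ℝ := κ * ((1 - α) * Real.sin (α * π) / π) * Real.exp (α * s * x) with hK_def
  -- basic factor rewriting
  have hfac : ∀ u : ℝ, 0 < u → ∀ p : ℝ,
      (2 * s / (1 - Real.exp (-2 * s * u))) ^ p
        = s ^ p * Real.exp (s * u * p) / Real.sinh (s * u) ^ p := by
    intro u hu p
    have hsu : 0 < s * u := mul_pos hs hu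
    have hsinh : 0 < Real.sinh (s * u) := Real.sinh_pos_iff.mpr hsu
    have h1 : Real.sinh (s * u) = (Real.exp (s * u) - Real.exp (-(s * u))) / 2 :=
      Real.sinh_eq _
    have h2 : Real.exp (-2 * s * u) = Real.exp (-(s * u)) * Real.exp (-(s * u)) := by
      rw [← Real.exp_add]; ring_nf
    have h3 : Real.exp (-(s * u)) * Real.exp (s * u) = 1 := by
      rw [← Real.exp_add]; simp
    have hden : 1 - Real.exp (-2 * s * u)
        = 2 * Real.exp (-(s * u)) * Real.sinh (s * u) := by
      rw [h1, h2]; linear_combination -h3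
    have hkey : 2 * s / (1 - Real.exp (-2 * s * u))
        = s * Real.exp (s * u) / Real.sinh (s * u) := by
      rw [hden, Real.exp_neg]
      field_simp
    rw [hkey, Real.div_rpow (by positivity) hsinh.le,
      Real.mul_rpow hs.le (Real.exp_pos _).le, ← Real.exp_mul]
  -- Step 1 : rewrite the integrand on the open interval
  have hcong : ∫ z in Set.Ioo (x - a) x,
      (2 * s / (1 - Real.exp (-2 * s * (x - z)))) ^ α *
        ((1 - α) * Real.sin (α * π) / π * Real.exp (2 * s * (α - 1) * z) *
          (2 * s / (1 - Real.exp (-2 * s * z))) ^ (2 - α))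
      = ∫ z in Set.Ioo (x - a) x, K * g z := by
    apply MeasureTheory.setIntegral_congr_fun measurableSet_Ioo
    intro z hz
    obtain ⟨hz1, hz2⟩ := hz
    have hxz : 0 < x - z := by linarith
    have hz0 : 0 < z := by linarith
    have hA : 0 < Real.sinh (s * (x - z)) := Real.sinh_pos_iff.mpr (mul_pos hs hxz)
    have hB : 0 < Real.sinh (s * z) := Real.sinh_pos_iff.mpr (mul_pos hs hz0)
    have hE : Real.exp (s * (x - z) * α) * Real.exp (2 * s * (α - 1) * z) *
        Real.exp (s * z * (2 - α)) = Real.exp (α * s * x) := by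
      rw [← Real.exp_add, ← Real.exp_add]; congr 1; ring
    have hsp : s ^ α * s ^ (2 - α) = κ := by
      rw [← Real.rpow_add hs, show α + (2 - α) = (2:ℝ) by ring, Real.rpow_two, sq, hss]
    simp only
    rw [hfac _ hxz α, hfac _ hz0 (2 - α), hg_def]
    simp only
    rw [Real.rpow_neg hA.le, show α - 2 = -(2 - α) by ring, Real.rpow_neg hB.le,
      hK_def, ← hsp, ← hE]
    have hAα : Real.sinh (s * (x - z)) ^ α ≠ 0 := by positivity
    have hB2α : Real.sinh (s * z) ^ (2 - α) ≠ 0 := by positivity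
    field_simp
  rw [hcong, MeasureTheory.integral_const_mul]
  -- Step 2 : integrability of g
  have hle' : x - a ≤ x := by linarith
  have hIoc : Set.uIoc (x - a) x = Set.Ioc (x - a) x := Set.uIoc_of_le hle'
  have hbound : IntervalIntegrable
      (fun z => Real.sinh (s * (x - a)) ^ (α - 2) * s ^ (-α) * (x - z) ^ (-α))
      volume (x - a) x := by
    have h0 : IntervalIntegrable (fun t : ℝ => t ^ (-α)) volume a 0 :=
      intervalIntegral.intervalIntegrable_rpow' (by linarith)
    have h1 := (h0.comp_sub_left x).const_mul
      (Real.sinh (s * (x - a)) ^ (α - 2) * s ^ (-α))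
    simpa using h1
  have hAx : 0 < Real.sinh (s * (x - a)) := Real.sinh_pos_iff.mpr
    (mul_pos hs (by linarith))
  have hc1 : Continuous (fun z : ℝ => Real.sinh (s * (x - z))) :=
    Real.continuous_sinh.comp (continuous_const.mul (continuous_const.sub continuous_id))
  have hc2 : Continuous (fun z : ℝ => Real.sinh (s * z)) :=
    Real.continuous_sinh.comp (continuous_const.mul continuous_id)
  have hgcont : ContinuousOn g (Set.Ioo (x - a) x) := by
    apply ContinuousOn.mul
    · apply ContinuousOn.rpow_const hc1.continuousOn
      intro z hz
      exact Or.inl (ne_of_gt (Real.sinh_pos_iff.mpr (mul_pos hs (by linarith [hz.2]))))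
    · apply ContinuousOn.rpow_const hc2.continuousOn
      intro z hz
      exact Or.inl (ne_of_gt (Real.sinh_pos_iff.mpr (mul_pos hs (by linarith [hz.1]))))
  have hg_int : IntervalIntegrable g volume (x - a) x := by
    apply hbound.mono_fun'
    · rw [hIoc, ← MeasureTheory.Measure.restrict_congr_set MeasureTheory.Ioo_ae_eq_Ioc]
      exact hgcont.aestronglyMeasurable measurableSet_Ioo
    · rw [hIoc]
      filter_upwards [MeasureTheory.ae_restrict_mem measurableSet_Ioc] with z hz
      obtain ⟨hz1, hz2⟩ := hz
      have hz0 : 0 < z := by linarith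
      have hB : 0 < Real.sinh (s * z) := Real.sinh_pos_iff.mpr (mul_pos hs hz0)
      have hxz : 0 ≤ x - z := by linarith
      have hgnn : 0 ≤ g z := by
        apply mul_nonneg (Real.rpow_nonneg (Real.sinh_nonneg_iff.mpr (by positivity)) _)
          (Real.rpow_nonneg hB.le _)
      rw [Real.norm_eq_abs, abs_of_nonneg hgnn, hg_def]
      simp only
      have hb1 : Real.sinh (s * (x - z)) ^ (-α) ≤ s ^ (-α) * (x - z) ^ (-α) := by
        rcases eq_or_lt_of_le hxz with h | h
        · rw [← h]
          simp only [mul_zero, Real.sinh_zero]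
          rw [Real.zero_rpow (show -α ≠ 0 by simp [ne_of_gt hα0, ne_of_lt (neg_lt_zero.mpr hα0)])]
          simp [Real.rpow_nonneg hs.le]
        · rw [← Real.mul_rpow hs.le (le_of_lt h)]
          exact Real.rpow_le_rpow_of_nonpos (mul_pos hs h)
            (Real.self_le_sinh_iff.mpr (by positivity)) (by linarith)
      have hb2 : Real.sinh (s * z) ^ (α - 2) ≤ Real.sinh (s * (x - a)) ^ (α - 2) :=
        Real.rpow_le_rpow_of_nonpos hAx
          (Real.sinh_le_sinh.mpr (by nlinarith)) (by linarith)
      calc Real.sinh (s * (x - z)) ^ (-α) * Real.sinh (s * z) ^ (α - 2)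
          ≤ (s ^ (-α) * (x - z) ^ (-α)) * Real.sinh (s * (x - a)) ^ (α - 2) := by
            apply mul_le_mul hb1 hb2 (Real.rpow_nonneg hB.le _)
            positivity
        _ = Real.sinh (s * (x - a)) ^ (α - 2) * s ^ (-α) * (x - z) ^ (-α) := by ring
  -- Step 3 : FTC with explicit antiderivative
  set c : ℝ := ((1 - α) * s * Real.sinh (s * x))⁻¹ with hc_def
  set F : ℝ → ℝ := fun z =>
    -c * (Real.sinh (s * (x - z)) / Real.sinh (s * z)) ^ (1 - α) with hF_def
  have hsx : 0 < Real.sinh (s * x) := Real.sinh_pos_iff.mpr (mul_pos hs (by linarith))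
  have hFcont : ContinuousOn F (Set.Icc (x - a) x) := by
    apply ContinuousOn.mul continuousOn_const
    apply ContinuousOn.rpow_const
    · apply ContinuousOn.div
      · exact hc1.continuousOn
      · exact hc2.continuousOn
      · intro z hz
        exact ne_of_gt (Real.sinh_pos_iff.mpr (mul_pos hs (by linarith [hz.1])))
    · intro z hz
      right; linarith
  have hFderiv : ∀ z ∈ Set.Ioo (x - a) x, HasDerivAt F (g z) z := by
    intro z hz
    obtain ⟨hz1, hz2⟩ := hz
    have hxz : 0 < x - z := by linarith
    have hz0 : 0 < z := by linarith
    have hA : 0 < Real.sinh (s * (x - z)) := Real.sinh_pos_iff.mpr (mul_pos hs hxz)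
    have hB : 0 < Real.sinh (s * z) := Real.sinh_pos_iff.mpr (mul_pos hs hz0)
    have hA' : HasDerivAt (fun z => Real.sinh (s * (x - z)))
        (Real.cosh (s * (x - z)) * (s * -1)) z :=
      (((hasDerivAt_id z).const_sub x).const_mul s).sinh
    have hB' : HasDerivAt (fun z => Real.sinh (s * z))
        (Real.cosh (s * z) * (s * 1)) z :=
      ((hasDerivAt_id z).const_mul s).sinh
    have hQ := hA'.div hB' (ne_of_gt hB)
    have hR := hQ.rpow_const (p := 1 - α)
      (Or.inl (ne_of_gt (div_pos hA hB)))
    have hF' := hR.const_mul (-c)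
    refine hF'.congr_deriv ?_
    symm
    have hnum : Real.cosh (s * (x - z)) * (s * -1) * Real.sinh (s * z) -
        Real.sinh (s * (x - z)) * (Real.cosh (s * z) * (s * 1))
        = -s * Real.sinh (s * x) := by
      have h := Real.sinh_add (s * (x - z)) (s * z)
      rw [show s * (x - z) + s * z = s * x by ring] at h
      linear_combination s * h
    rw [hnum, hg_def]
    simp only [Pi.div_apply]
    rw [show (1:ℝ) - α - 1 = -α by ring,
      Real.div_rpow hA.le hB.le, Real.rpow_neg hA.le, Real.rpow_neg hB.le,
      show α - 2 = α - 2 from rfl, Real.rpow_sub hB, Real.rpow_two, sq, hc_def]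
    have h1 : Real.sinh (s * (x - z)) ^ α ≠ 0 := by positivity
    have h2 : Real.sinh (s * z) ^ α ≠ 0 := by positivity
    field_simp
  have hFTC := intervalIntegral.integral_eq_sub_of_hasDerivAt_of_le hle' hFcont hFderiv hg_int
  have hIoo : ∫ z in Set.Ioo (x - a) x, g z = ∫ z in (x - a)..x, g z := by
    rw [intervalIntegral.integral_of_le hle', MeasureTheory.integral_Ioc_eq_integral_Ioo]
  rw [hIoo, hFTC, hF_def]
  -- Step 4 : final evaluation
  simp only [sub_self, mul_zero, Real.sinh_zero, zero_div,
    Real.zero_rpow (ne_of_gt h1α), zero_sub,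
    show x - (x - a) = a by ring]
  rw [Real.div_rpow (Real.sinh_nonneg_iff.mpr (by positivity)) hAx.le]
  have hπ : (0:ℝ) < π := Real.pi_pos
  have hQα : Real.sinh (s * (x - a)) ^ (1 - α) ≠ 0 := by positivity
  rw [hK_def, hc_def, ← hss]
  field_simp
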